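/- Let G be a locally compact second countable group acting essentially freely and measure-preservingly on a standard probability space (X,μ), and let Y ⊆ X be a cross section: there is a neighborhood U of e ∈ G such that (g,y) ↦ g·y is injective on U × Y, and μ(X \ G·Y) = 0. Then the relation ℛ := {(y,y′) ∈ Y × Y : y′ ∈ G·y} is a countable Borel equivalence relation on Y, i.e. ℛ is Borel, is an equivalence relation, and each equivalence class is countable. -/

import Mathlib

open MeasureTheory Set

theorem aux_polish (Q : Type*) [TopologicalSpace Q] [T3Space Q] [SecondCountableTopology Q]
    [LocallyCompactSpace Q] : PolishSpace Q := by
  letI : MetricSpace Q := TopologicalSpace.metrizableSpaceMetric Q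
  haveI : TopologicalSpace.SeparableSpace Q := inferInstance
  set C := UniformSpace.Completion Q
  haveI : PolishSpace C := inferInstance
  have hiso : Isometry ((↑) : Q → C) := UniformSpace.Completion.coe_isometry
  have hd : Dense (Set.range ((↑) : Q → C)) := UniformSpace.Completion.denseRange_coe
  have hopen : IsOpen (Set.range ((↑) : Q → C)) := by
    rw [isOpen_iff_mem_nhds]
    rintro y ⟨q, rfl⟩
    obtain ⟨K, hKc, hKn⟩ := exists_compact_mem_nhds q
    obtain ⟨r, hr, hball⟩ := Metric.mem_nhds_iff.1 hKn
    have hKclosed : IsClosed ((↑) '' K : Set C) :=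
      (hKc.image (UniformSpace.Completion.continuous_coe Q)).isClosed
    have hsub : Metric.ball ((q : C)) r ⊆ (↑) '' K := by
      have h1 : Metric.ball ((q : C)) r ⊆
          closure (Metric.ball ((q : C)) r ∩ Set.range ((↑) : Q → C)) :=
        hd.open_subset_closure_inter Metric.isOpen_ball
      have h2 : Metric.ball ((q : C)) r ∩ Set.range ((↑) : Q → C) ⊆ (↑) '' K := by
        rintro z ⟨hz, p, rfl⟩
        refine ⟨p, hball ?_, rfl⟩
        have : dist (p : C) (q : C) < r := Metric.mem_ball.1 hz
        rwa [Metric.mem_ball, ← UniformSpace.Completion.dist_eq]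
      calc Metric.ball ((q : C)) r
          ⊆ closure (Metric.ball ((q : C)) r ∩ Set.range ((↑) : Q → C)) := h1
        _ ⊆ closure ((↑) '' K) := closure_mono h2
        _ = (↑) '' K := hKclosed.closure_eq
    exact Filter.mem_of_superset (Metric.ball_mem_nhds _ hr)
      (hsub.trans (Set.image_subset_range _ _))
  haveI : PolishSpace (Set.range ((↑) : Q → C)) := hopen.polishSpace
  have hemb : Topology.IsEmbedding ((↑) : Q → C) := hiso.isUniformEmbedding.isEmbedding
  exact hemb.toHomeomorph.isClosedEmbedding.polishSpace

/-- For an essentially free pmp Borel action of a lcsc group `G` on a standard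
probability space and a cross section `Y`, the relation
`ℛ = {(y, y') ∈ Y × Y : y' ∈ G • y}` is a countable Borel equivalence relation on `Y`. -/
theorem stmt15 {G X : Type*} [Group G] [TopologicalSpace G] [IsTopologicalGroup G]
    [LocallyCompactSpace G] [SecondCountableTopology G] [MeasurableSpace G] [BorelSpace G]
    [MeasurableSpace X] [StandardBorelSpace X] [MulAction G X]
    (hact : Measurable (fun p : G × X => p.1 • p.2))
    (μ : Measure X) [IsProbabilityMeasure μ]
    (hpmp : ∀ g : G, MeasurePreserving (fun x => g • x) μ μ)
    (hfree : μ {x : X | ∃ g : G, g ≠ 1 ∧ g • x = x} = 0)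
    (Y : Set X) (hY : MeasurableSet Y)
    (U : Set G) (hU : U ∈ nhds (1 : G))
    (hinj : Set.InjOn (fun p : G × X => p.1 • p.2) (U ×ˢ Y))
    (hcover : μ {x : X | ∀ g : G, g • x ∉ Y} = 0) :
    MeasurableSet {p : X × X | p.1 ∈ Y ∧ p.2 ∈ Y ∧ ∃ g : G, p.2 = g • p.1} ∧
    (∀ y ∈ Y, ∃ g : G, y = g • y) ∧
    (∀ y ∈ Y, ∀ z ∈ Y, (∃ g : G, z = g • y) → ∃ g : G, y = g • z) ∧
    (∀ y ∈ Y, ∀ z ∈ Y, ∀ w ∈ Y,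
      (∃ g : G, z = g • y) → (∃ g : G, w = g • z) → ∃ g : G, w = g • y) ∧
    (∀ y ∈ Y, {z : X | z ∈ Y ∧ ∃ g : G, z = g • y}.Countable) := by
  classical
  -- a small symmetric neighborhood of 1
  obtain ⟨V, hVo, hV1, hVU⟩ := exists_open_nhds_one_mul_subset hU
  set W : Set G := V ∩ V⁻¹ with hWdef
  have hWo : IsOpen W := hVo.inter hVo.inv
  have hW1 : (1 : G) ∈ W := ⟨hV1, by simpa using hV1⟩
  have hWU : ∀ a b : G, a ∈ W → b ∈ W → a * b⁻¹ ∈ U := fun a b ha hb =>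
    hVU (Set.mul_mem_mul ha.1 hb.2)
  have h1U : (1 : G) ∈ U := mem_of_mem_nhds hU
  -- the key uniqueness: two elements of the same right translate `W * d` moving `x ∈ Y` into `Y`
  -- coincide
  have key : ∀ d : G, ∀ x ∈ Y, ∀ g g' : G, g * d⁻¹ ∈ W → g' * d⁻¹ ∈ W →
      g • x ∈ Y → g' • x ∈ Y → g = g' := by
    intro d x hx g g' hg hg' hgx hg'x
    have hu : g' * g⁻¹ ∈ U := by
      have := hWU _ _ hg' hg
      simpa [mul_inv_rev, mul_assoc] using this
    have heq : (fun p : G × X => p.1 • p.2) (g' * g⁻¹, g • x)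
        = (fun p : G × X => p.1 • p.2) (1, g' • x) := by
      simp [smul_smul, mul_assoc]
    have := hinj (Set.mem_prod.2 ⟨hu, hgx⟩) (Set.mem_prod.2 ⟨h1U, hg'x⟩) heq
    have h1 : g' * g⁻¹ = 1 := congrArg Prod.fst this
    exact (mul_inv_eq_one.mp h1).symm
  -- countable cover of `G` by right translates of `W`
  have hOopen : ∀ d : G, IsOpen {g : G | g * d⁻¹ ∈ W} := fun d =>
    hWo.preimage (continuous_mul_right d⁻¹)
  obtain ⟨D, hDc, hDu⟩ := TopologicalSpace.isOpen_iUnion_countable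
    (fun d : G => {g : G | g * d⁻¹ ∈ W}) hOopen
  have hDcover : ∀ g : G, ∃ d ∈ D, g * d⁻¹ ∈ W := by
    intro g
    have : g ∈ ⋃ d, {h : G | h * d⁻¹ ∈ W} :=
      Set.mem_iUnion.2 ⟨g, by simpa using hW1⟩
    rw [← hDu] at this
    simpa using this
  -- the separation quotient of G
  letI mQ : MeasurableSpace (SeparationQuotient G) := borel _
  haveI : BorelSpace (SeparationQuotient G) := ⟨rfl⟩
  haveI : SecondCountableTopology (SeparationQuotient G) :=
    SeparationQuotient.isQuotientMap_mk.secondCountableTopology SeparationQuotient.isOpenMap_mk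
  haveI : LocallyCompactSpace (SeparationQuotient G) :=
    SeparationQuotient.isOpenQuotientMap_mk.locallyCompactSpace
  haveI : PolishSpace (SeparationQuotient G) := aux_polish _
  -- the action is constant on inseparable elements
  have hconst : ∀ g g' : G, Inseparable g g' → (fun x : X => g • x) = fun x : X => g' • x := by
    intro g g' h
    funext x
    have hmx : Measurable (fun h : G => h • x) :=
      hact.comp (measurable_id.prodMk measurable_const)
    have hmem : g • x ∈ ({g' • x} : Set X) ↔ g' • x ∈ ({g' • x} : Set X) :=
      h.mem_measurableSet_iff (hmx (measurableSet_singleton (g' • x)))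
    simpa using hmem.2 rfl
  set L : SeparationQuotient G → X → X :=
    SeparationQuotient.lift (fun g (x : X) => g • x) hconst with hLdef
  have hLmk : ∀ (g : G) (x : X), L (SeparationQuotient.mk g) x = g • x := fun g x => rfl
  -- transfer of measurability through the quotient
  have hGcomap : (‹MeasurableSpace G› : MeasurableSpace G)
      = MeasurableSpace.comap SeparationQuotient.mk mQ := by
    have hind : (‹TopologicalSpace G› : TopologicalSpace G)
        = TopologicalSpace.induced SeparationQuotient.mk inferInstance :=
      SeparationQuotient.isInducing_mk.eq_induced
    rw [‹BorelSpace G›.measurable_eq]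
    conv_lhs => rw [hind]
    exact borel_comap
  have hprod : (Prod.instMeasurableSpace : MeasurableSpace (G × X))
      = MeasurableSpace.comap (Prod.map SeparationQuotient.mk (id : X → X))
        Prod.instMeasurableSpace := by
    have h1 : (Prod.instMeasurableSpace : MeasurableSpace (G × X))
        = MeasurableSpace.comap Prod.fst ‹MeasurableSpace G›
          ⊔ MeasurableSpace.comap Prod.snd ‹MeasurableSpace X› := rfl
    have h2 : (Prod.instMeasurableSpace : MeasurableSpace (SeparationQuotient G × X))
        = MeasurableSpace.comap Prod.fst mQ ⊔ MeasurableSpace.comap Prod.snd ‹MeasurableSpace X› :=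
      rfl
    rw [h1, h2, MeasurableSpace.comap_sup, hGcomap, MeasurableSpace.comap_comp,
      MeasurableSpace.comap_comp, MeasurableSpace.comap_comp]
    rfl
  have hsurj : Function.Surjective (Prod.map SeparationQuotient.mk (id : X → X)) :=
    (SeparationQuotient.surjective_mk (X := G)).prodMap Function.surjective_id
  have htrans : ∀ S : Set (SeparationQuotient G × X),
      MeasurableSet ((Prod.map SeparationQuotient.mk (id : X → X)) ⁻¹' S) → MeasurableSet S := by
    intro S hS
    rw [hprod] at hS
    obtain ⟨S', hS', hpre⟩ := hS
    rwa [← hsurj.preimage_injective hpre]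
  have hL : Measurable (fun p : SeparationQuotient G × X => L p.1 p.2) := by
    intro A hA
    apply htrans
    have heq : (Prod.map SeparationQuotient.mk (id : X → X))
        ⁻¹' ((fun p : SeparationQuotient G × X => L p.1 p.2) ⁻¹' A)
        = (fun p : G × X => p.1 • p.2) ⁻¹' A := by
      ext ⟨g, x⟩
      simp [hLmk]
    rw [heq]
    exact hact hA
  -- measurability of each piece of the relation
  have hmeasRd : ∀ d : G, MeasurableSet
      {p : X × X | p.1 ∈ Y ∧ p.2 ∈ Y ∧ ∃ g : G, g * d⁻¹ ∈ W ∧ p.2 = g • p.1} := by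
    intro d
    set O : Set G := {g : G | g * d⁻¹ ∈ W} with hOdef
    set S : Set (SeparationQuotient G × X) :=
      {p | p.1 ∈ SeparationQuotient.mk '' O ∧ p.2 ∈ Y ∧ L p.1 p.2 ∈ Y} with hSdef
    have hSmeas : MeasurableSet S := by
      refine MeasurableSet.inter ?_ (MeasurableSet.inter ?_ ?_)
      · exact (SeparationQuotient.isOpenMap_mk O (hOopen d)).measurableSet.preimage
          measurable_fst
      · exact hY.preimage measurable_snd
      · exact hL hY
    set f : SeparationQuotient G × X → X × X := fun p => (p.2, L p.1 p.2) with hfdef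
    have hfmeas : Measurable f := measurable_snd.prodMk hL
    have hfinj : Set.InjOn f S := by
      rintro ⟨q1, x1⟩ h1 ⟨q2, x2⟩ h2 hf
      obtain ⟨g1, hg1, rfl⟩ := h1.1
      obtain ⟨g2, hg2, rfl⟩ := h2.1
      have hx : x1 = x2 := congrArg Prod.fst hf
      subst hx
      have himg : g1 • x1 = g2 • x1 := by
        have := congrArg Prod.snd hf
        simpa [hfdef, hLmk] using this
      have hgeq : g1 = g2 := by
        refine key d x1 h1.2.1 g1 g2 hg1 hg2 ?_ ?_
        · have := h1.2.2; rwa [hLmk] at this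
        · have := h2.2.2; rwa [hLmk] at this
      rw [hgeq]
    have himage : f '' S
        = {p : X × X | p.1 ∈ Y ∧ p.2 ∈ Y ∧ ∃ g : G, g * d⁻¹ ∈ W ∧ p.2 = g • p.1} := by
      ext ⟨x, z⟩
      constructor
      · rintro ⟨⟨q, x'⟩, ⟨⟨g, hgO, rfl⟩, hx'Y, hLY⟩, hfp⟩
        have h1 : x' = x := congrArg Prod.fst hfp
        have h2 : g • x' = z := by
          have := congrArg Prod.snd hfp
          simpa [hfdef, hLmk] using this
        subst h1
        refine ⟨hx'Y, ?_, g, hgO, h2.symm⟩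
        rw [← h2]
        rwa [hLmk] at hLY
      · rintro ⟨hxY, hzY, g, hgW, hz⟩
        have hz' : z = g • x := hz
        refine ⟨(SeparationQuotient.mk g, x), ⟨⟨g, hgW, rfl⟩, hxY, ?_⟩, ?_⟩
        · rw [hLmk, ← hz']; exact hzY
        · show (x, L (SeparationQuotient.mk g) x) = (x, z)
          rw [hLmk, ← hz']
    rw [← himage]
    exact hSmeas.image_of_measurable_injOn hfmeas hfinj
  -- assemble
  refine ⟨?_, ?_, ?_, ?_, ?_⟩
  · have hRunion : {p : X × X | p.1 ∈ Y ∧ p.2 ∈ Y ∧ ∃ g : G, p.2 = g • p.1}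
        = ⋃ d ∈ D, {p : X × X | p.1 ∈ Y ∧ p.2 ∈ Y ∧ ∃ g : G, g * d⁻¹ ∈ W ∧ p.2 = g • p.1} := by
      ext ⟨x, z⟩
      simp only [Set.mem_setOf_eq, Set.mem_iUnion]
      constructor
      · rintro ⟨hx, hz, g, rfl⟩
        obtain ⟨d, hdD, hgd⟩ := hDcover g
        exact ⟨d, hdD, hx, hz, g, hgd, rfl⟩
      · rintro ⟨d, hdD, hx, hz, g, _, rfl⟩
        exact ⟨hx, hz, g, rfl⟩
    rw [hRunion]
    exact MeasurableSet.biUnion hDc fun d _ => hmeasRd d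
  · exact fun y _ => ⟨1, (one_smul G y).symm⟩
  · rintro y _ z _ ⟨g, rfl⟩
    exact ⟨g⁻¹, (inv_smul_smul g y).symm⟩
  · rintro y _ z _ w _ ⟨g, rfl⟩ ⟨h, rfl⟩
    exact ⟨h * g, (mul_smul h g y).symm⟩
  · intro y hy
    have hcls : {z : X | z ∈ Y ∧ ∃ g : G, z = g • y}
        = ⋃ d ∈ D, {z : X | z ∈ Y ∧ ∃ g : G, g * d⁻¹ ∈ W ∧ z = g • y} := by
      ext z
      simp only [Set.mem_setOf_eq, Set.mem_iUnion]
      constructor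
      · rintro ⟨hz, g, rfl⟩
        obtain ⟨d, hdD, hgd⟩ := hDcover g
        exact ⟨d, hdD, hz, g, hgd, rfl⟩
      · rintro ⟨d, hdD, hz, g, _, rfl⟩
        exact ⟨hz, g, rfl⟩
    rw [hcls]
    refine Set.Countable.biUnion hDc fun d _ => Set.Subsingleton.countable ?_
    rintro z ⟨hz, g, hg, rfl⟩ z' ⟨hz', g', hg', rfl⟩
    rw [key d y hy g g' hg hg' hz hz']
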